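/- Let r1, k1, r2, k2, p, b, q1, q2, E, e > 0, m ∈ (0,1), ψ ∈ {0,1}, and define α0 = k1·k2·p·(1−m)·(r2 − ψ·q2·E) − k1·r2·(r1 − ψ·q1·E), α1 = r1·r2 − 2·k1·r2·(r1 − ψ·q1·E)·b·(1−m) + k1·k2·p·(1−m)²·(b·(r2 − ψ·q2·E) + e·p), α2 = 2·r1·r2·b·(1−m) − k1·r2·b²·(1−m)²·(r1 − ψ·q1·E), α3 = r1·r2·b²·(1−m)². Suppose α0 < 0 and either (α1 < 0 and α2 < 0), or (α1 < 0 and α2 > 0), or (α1 > 0 and α2 > 0), so that the cubic α3·x³ + α2·x² + α1·x + α0 has a unique positive root x*, and suppose furthermore r1 > ψ·q1·E + r1·x*/k1. Then there exists exactly one pair (x, y) with x > 0 and y > 0 satisfying both r1·(1 − x/k1) − p·(1−m)·y/(1+b·(1−m)·x) = ψ·q1·E and r2·(1 − y/k2) + e·p·(1−m)·x/(1+b·(1−m)·x) = ψ·q2·E; namely x = x* and y = (1/(p·(1−m)))·(r1 − ψ·q1·E − r1·x*/k1)·(1 + b·(1−m)·x*). -/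

import Mathlib

lemma cubic_root_unique (a3 a2 a1 a0 u v : ℝ) (h3 : 0 < a3) (h0 : a0 < 0)
    (hs : a1 < 0 ∨ 0 < a2) (hu : 0 < u) (hv : 0 < v)
    (hgu : a3*u^3+a2*u^2+a1*u+a0 = 0) (hgv : a3*v^3+a2*v^2+a1*v+a0 = 0) : u = v := by
  rcases hs with h1 | h2
  · have key : (v-u)*(a1*u*v + a0*(u+v) - a3*u^2*v^2) = 0 := by
      linear_combination v^2*hgu - u^2*hgv
    have hneg : a1*u*v + a0*(u+v) - a3*u^2*v^2 < 0 := by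
      nlinarith [mul_pos hu hv, sq_nonneg (u*v)]
    rcases mul_eq_zero.mp key with h | h
    · linarith
    · exact absurd h (ne_of_lt hneg)
  · have key : (v-u)*(a0 - a3*u*v*(u+v) - a2*u*v) = 0 := by
      linear_combination v*hgu - u*hgv
    have hneg : a0 - a3*u*v*(u+v) - a2*u*v < 0 := by
      nlinarith [mul_pos hu hv, mul_pos (mul_pos hu hv) (add_pos hu hv)]
    rcases mul_eq_zero.mp key with h | h
    · linarith
    · exact absurd h (ne_of_lt hneg)

/-- Existence and uniqueness of the interior equilibrium (Theorem 3.1):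
if the cubic `α3*x^3 + α2*x^2 + α1*x + α0` has the stated coefficient signs,
`xs` is its (unique) positive root and `r1 > ψ*q1*E + r1*xs/k1`, then the
equilibrium equations have exactly one positive solution, namely
`(xs, ys)` with `ys = (1/(p*(1-m))) * (r1 - ψ*q1*E - r1*xs/k1) * (1 + b*(1-m)*xs)`. -/
theorem stmt_5 (r1 k1 r2 k2 p b q1 q2 E e m ψ : ℝ)
    (hr1 : 0 < r1) (hk1 : 0 < k1) (hr2 : 0 < r2) (hk2 : 0 < k2)
    (hp : 0 < p) (hb : 0 < b) (hq1 : 0 < q1) (hq2 : 0 < q2)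
    (hE : 0 < E) (he : 0 < e) (hm : m ∈ Set.Ioo (0 : ℝ) 1)
    (hψ : ψ = 0 ∨ ψ = 1)
    (α0 α1 α2 α3 : ℝ)
    (hα0 : α0 = k1 * k2 * p * (1 - m) * (r2 - ψ * q2 * E) - k1 * r2 * (r1 - ψ * q1 * E))
    (hα1 : α1 = r1 * r2 - 2 * k1 * r2 * (r1 - ψ * q1 * E) * b * (1 - m)
        + k1 * k2 * p * (1 - m) ^ 2 * (b * (r2 - ψ * q2 * E) + e * p))
    (hα2 : α2 = 2 * r1 * r2 * b * (1 - m) - k1 * r2 * b ^ 2 * (1 - m) ^ 2 * (r1 - ψ * q1 * E))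
    (hα3 : α3 = r1 * r2 * b ^ 2 * (1 - m) ^ 2)
    (hα0neg : α0 < 0)
    (hsigns : (α1 < 0 ∧ α2 < 0) ∨ (α1 < 0 ∧ 0 < α2) ∨ (0 < α1 ∧ 0 < α2))
    (xs ys : ℝ)
    (hxs : 0 < xs ∧ α3 * xs ^ 3 + α2 * xs ^ 2 + α1 * xs + α0 = 0)
    (hys : ys = (1 / (p * (1 - m))) * (r1 - ψ * q1 * E - r1 * xs / k1) * (1 + b * (1 - m) * xs))
    (hgrowth : r1 > ψ * q1 * E + r1 * xs / k1) :
    (0 < xs ∧ 0 < ys ∧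
      r1 * (1 - xs / k1) - p * (1 - m) * ys / (1 + b * (1 - m) * xs) = ψ * q1 * E ∧
      r2 * (1 - ys / k2) + e * p * (1 - m) * xs / (1 + b * (1 - m) * xs) = ψ * q2 * E) ∧
    (∀ x y : ℝ, 0 < x → 0 < y →
      r1 * (1 - x / k1) - p * (1 - m) * y / (1 + b * (1 - m) * x) = ψ * q1 * E →
      r2 * (1 - y / k2) + e * p * (1 - m) * x / (1 + b * (1 - m) * x) = ψ * q2 * E →
      x = xs ∧ y = ys) := by
  obtain ⟨hxs0, hcub⟩ := hxs
  have hm1 : (0:ℝ) < 1 - m := by linarith [hm.2]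
  have hpm : (0:ℝ) < p * (1 - m) := mul_pos hp hm1
  have hpm' : p * (1 - m) ≠ 0 := ne_of_gt hpm
  have hDs : (0:ℝ) < 1 + b * (1 - m) * xs := by positivity
  have hDs' : (1:ℝ) + b * (1 - m) * xs ≠ 0 := ne_of_gt hDs
  have hk1' : k1 ≠ 0 := ne_of_gt hk1
  have hk2' : k2 ≠ 0 := ne_of_gt hk2
  have ha3 : 0 < α3 := by rw [hα3]; positivity
  -- ys positivity
  have hgr : 0 < r1 - ψ * q1 * E - r1 * xs / k1 := by linarith
  have hys0 : 0 < ys := by rw [hys]; positivity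
  -- cleared form of the ys definition
  have H1s : ys * (p * (1 - m)) * k1
      = ((r1 - ψ * q1 * E) * k1 - r1 * xs) * (1 + b * (1 - m) * xs) := by
    rw [hys]; field_simp
  -- equation 1 for (xs, ys)
  have E1s : r1 * (1 - xs / k1) - p * (1 - m) * ys / (1 + b * (1 - m) * xs) = ψ * q1 * E := by
    rw [hys]; field_simp; ring
  -- cubic expanded
  have hcub' : (r1 * r2 * b ^ 2 * (1 - m) ^ 2) * xs ^ 3
      + (2 * r1 * r2 * b * (1 - m) - k1 * r2 * b ^ 2 * (1 - m) ^ 2 * (r1 - ψ * q1 * E)) * xs ^ 2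
      + (r1 * r2 - 2 * k1 * r2 * (r1 - ψ * q1 * E) * b * (1 - m)
        + k1 * k2 * p * (1 - m) ^ 2 * (b * (r2 - ψ * q2 * E) + e * p)) * xs
      + (k1 * k2 * p * (1 - m) * (r2 - ψ * q2 * E) - k1 * r2 * (r1 - ψ * q1 * E)) = 0 := by
    rw [← hα0, ← hα1, ← hα2, ← hα3]; exact hcub
  -- equation 2 for (xs, ys), cleared form
  have H2s' : (k1 * (p * (1 - m))) *
      (r2 * (k2 - ys) * (1 + b * (1 - m) * xs) + e * p * (1 - m) * xs * k2
        - ψ * q2 * E * k2 * (1 + b * (1 - m) * xs)) = 0 := by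
    linear_combination hcub' - (r2 * (1 + b * (1 - m) * xs)) * H1s
  have H2s : r2 * (k2 - ys) * (1 + b * (1 - m) * xs) + e * p * (1 - m) * xs * k2
      = ψ * q2 * E * k2 * (1 + b * (1 - m) * xs) := by
    have h := (mul_eq_zero.mp H2s').resolve_left (by positivity)
    linarith
  have E2s : r2 * (1 - ys / k2) + e * p * (1 - m) * xs / (1 + b * (1 - m) * xs) = ψ * q2 * E := by
    field_simp
    linear_combination H2s
  refine ⟨⟨hxs0, hys0, E1s, E2s⟩, ?_⟩
  intro x y hx hy he1 he2
  have hD : (0:ℝ) < 1 + b * (1 - m) * x := by positivity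
  have hD' : (1:ℝ) + b * (1 - m) * x ≠ 0 := ne_of_gt hD
  -- cleared form of equation 1 for (x,y)
  have H1 : y * (p * (1 - m)) * k1
      = ((r1 - ψ * q1 * E) * k1 - r1 * x) * (1 + b * (1 - m) * x) := by
    field_simp at he1
    linear_combination -he1
  have H2 : r2 * (k2 - y) * (1 + b * (1 - m) * x) + e * p * (1 - m) * x * k2
      = ψ * q2 * E * k2 * (1 + b * (1 - m) * x) := by
    field_simp at he2
    linear_combination he2
  have hcubx : α3 * x ^ 3 + α2 * x ^ 2 + α1 * x + α0 = 0 := by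
    rw [hα0, hα1, hα2, hα3]
    linear_combination (k1 * p * (1 - m)) * H2 + (r2 * (1 + b * (1 - m) * x)) * H1
  have hs' : α1 < 0 ∨ 0 < α2 := by tauto
  have hxeq : x = xs :=
    cubic_root_unique α3 α2 α1 α0 x xs ha3 hα0neg hs' hx hxs0 (by linear_combination hcubx)
      (by linear_combination hcub)
  subst hxeq
  refine ⟨rfl, ?_⟩
  have hyy : y * (p * (1 - m) * k1) = ys * (p * (1 - m) * k1) := by
    linear_combination H1 - H1s
  exact mul_right_cancel₀ (by positivity) hyy
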